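/- Let G be a simple graph on a finite vertex type V and let s be a set of edges of G. For an edge e of G, let its incidence vector over F2 = ZMod 2 be the function V → F2 taking value 1 exactly on the two endpoints of e (the column of the incidence matrix of G at e). Then the family of incidence vectors of the edges in s is linearly independent over F2 if and only if the spanning subgraph of G whose edge set is s is acyclic (contains no cycle). -/

import Mathlib

open SimpleGraph

section Aux

variable {V : Type*} [Fintype V] [DecidableEq V]

private lemma zmod2_ne_zero {x : ZMod 2} (h : x ≠ 0) : x = 1 := by
  revert h; revert x; decide

/-- incidence matrix entry as an `if`, for actual edges. -/
private lemma incMatrix_eq_ite (G : SimpleGraph V) [DecidableRel G.Adj] {e : Sym2 V} (he : e ∈ G.edgeSet) (w : V) :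
    G.incMatrix (ZMod 2) w e = if w ∈ e then 1 else 0 := by
  by_cases hw : w ∈ e
  · rw [if_pos hw]
    exact G.incMatrix_of_mem_incidenceSet ⟨he, hw⟩
  · rw [if_neg hw]
    exact G.incMatrix_of_notMem_incidenceSet fun hc => hw hc.2

/-- Parity of the number of edges of a walk containing a given vertex. -/
private lemma walk_sum_edges {H : SimpleGraph V} {u v : V} (p : H.Walk u v) (w : V) :
    (p.edges.map fun e => if w ∈ e then (1 : ZMod 2) else 0).sum
      = (if w = u then 1 else 0) + (if w = v then 1 else 0) := by
  classical
  induction p with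
  | nil =>
    simp only [SimpleGraph.Walk.edges_nil, List.map_nil, List.sum_nil]
    exact (CharTwo.add_self_eq_zero _).symm
  | @cons a b c h q ih =>
    simp only [SimpleGraph.Walk.edges_cons, List.map_cons, List.sum_cons, ih]
    have hab : a ≠ b := h.ne
    have hmem : (if w ∈ s(a, b) then (1 : ZMod 2) else 0)
        = (if w = a then 1 else 0) + (if w = b then 1 else 0) := by
      by_cases h1 : w = a <;> by_cases h2 : w = b <;>
        simp_all [Sym2.mem_iff]
    rw [hmem]
    have hBB : (if w = b then (1 : ZMod 2) else 0) + (if w = b then 1 else 0) = 0 :=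
      CharTwo.add_self_eq_zero _
    rw [show ((if w = a then (1 : ZMod 2) else 0) + (if w = b then 1 else 0))
          + ((if w = b then 1 else 0) + (if w = c then 1 else 0))
        = ((if w = a then 1 else 0) + (if w = c then 1 else 0))
          + ((if w = b then 1 else 0) + (if w = b then 1 else 0)) by ring, hBB, add_zero]

private lemma cycle_sum_zero {H : SimpleGraph V} {u : V} {c : H.Walk u u} (hc : c.IsCycle)
    (w : V) :
    ∑ e ∈ c.edges.toFinset, (if w ∈ e then (1 : ZMod 2) else 0) = 0 := by
  classical
  rw [List.sum_toFinset _ hc.isCircuit.isTrail.edges_nodup, walk_sum_edges]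
  exact CharTwo.add_self_eq_zero _

/-- Linear dependence of incidence columns is equivalent to the existence of a nonempty
finite edge set with zero column sum. -/
private lemma dep_iff (G : SimpleGraph V) [DecidableRel G.Adj] (s : Set (Sym2 V)) :
    ¬ LinearIndependent (ZMod 2)
        (fun e : s => fun v : V => G.incMatrix (ZMod 2) v (e : Sym2 V)) ↔
      ∃ t : Finset (Sym2 V), ↑t ⊆ s ∧ t.Nonempty ∧
        ∀ w : V, ∑ e ∈ t, G.incMatrix (ZMod 2) w e = 0 := by
  classical
  set col : Sym2 V → (V → ZMod 2) := fun e v => G.incMatrix (ZMod 2) v e with hcol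
  have hfam : (fun e : s => fun v : V => G.incMatrix (ZMod 2) v (e : Sym2 V))
      = (col ∘ ((↑) : s → Sym2 V)) := rfl
  rw [hfam, linearIndependent_comp_subtype_iff, linearIndepOn_iff]
  push_neg
  constructor
  · rintro ⟨f, hsupp, hzero, hne⟩
    refine ⟨f.support, (Finsupp.mem_supported _ _).mp hsupp, Finsupp.support_nonempty_iff.mpr hne, ?_⟩
    intro w
    rw [Finsupp.linearCombination_apply, Finsupp.sum] at hzero
    have : ∑ e ∈ f.support, col e = 0 := by
      rw [← hzero]
      refine (Finset.sum_congr rfl fun e he => ?_).symm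
      rw [zmod2_ne_zero (Finsupp.mem_support_iff.mp he), one_smul]
    have := congrFun this w
    rw [Finset.sum_apply] at this
    exact this
  · rintro ⟨t, hts, ⟨e₀, he₀⟩, hsum⟩
    refine ⟨∑ e ∈ t, Finsupp.single e (1 : ZMod 2), ?_, ?_, ?_⟩
    · rw [Finsupp.mem_supported]
      refine Set.Subset.trans ?_ hts
      intro a ha
      have := Finsupp.support_finset_sum (s := t)
        (f := fun e => Finsupp.single e (1 : ZMod 2)) ha
      simp only [Finset.mem_biUnion] at this
      obtain ⟨e, het, hae⟩ := this
      have := Finsupp.support_single_subset hae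
      simp only [Finset.mem_singleton] at this
      simpa [this] using het
    · rw [map_sum]
      have : ∀ e ∈ t, (Finsupp.linearCombination (ZMod 2) col) (Finsupp.single e (1 : ZMod 2))
          = col e := fun e _ => by
        rw [Finsupp.linearCombination_single, one_smul]
      rw [Finset.sum_congr rfl this]
      funext w
      rw [Finset.sum_apply]
      exact hsum w
    · intro hzero
      have h1 : (∑ e ∈ t, Finsupp.single e (1 : ZMod 2)) e₀ = 1 := by
        rw [Finset.sum_apply']
        rw [Finset.sum_eq_single e₀ (fun b _ hb => Finsupp.single_eq_of_ne hb.symm)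
          (fun h => absurd he₀ h)]
        exact Finsupp.single_eq_same
      rw [hzero] at h1
      simp at h1

end Aux

open Classical in
/-- The cycle matroid of a simple graph `G` on a finite vertex type is represented over
`F2` by the columns of its incidence matrix: for a set `s` of edges of `G`, the family
of incidence vectors (columns of the incidence matrix over `ZMod 2`) of the edges in `s`
is linearly independent iff the spanning subgraph with edge set `s` is acyclic. -/
theorem incMatrix_linearIndependent_iff_acyclic {V : Type*} [Fintype V]
    (G : SimpleGraph V) (s : Set (Sym2 V)) (hs : s ⊆ G.edgeSet) :
    LinearIndependent (ZMod 2)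
        (fun e : s => fun v : V => G.incMatrix (ZMod 2) v (e : Sym2 V)) ↔
      (SimpleGraph.fromEdgeSet s).IsAcyclic := by
  classical
  rw [← not_iff_not, dep_iff G s]
  constructor
  · -- a nonempty zero-sum edge set gives a cycle
    rintro ⟨t, hts, htne, hsum⟩
    -- every edge of `t` gives an adjacency in `H := fromEdgeSet ↑t`
    set H : SimpleGraph V := SimpleGraph.fromEdgeSet (↑t : Set (Sym2 V)) with hH
    have htH : ∀ e ∈ t, e ∈ H.edgeSet := by
      intro e het
      rw [hH, SimpleGraph.edgeSet_fromEdgeSet]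
      exact ⟨het, G.not_isDiag_of_mem_edgeSet (hs (hts het))⟩
    have hHt : H.edgeSet ⊆ ↑t := by
      rw [hH, SimpleGraph.edgeSet_fromEdgeSet]
      exact Set.diff_subset
    have hHle : H ≤ SimpleGraph.fromEdgeSet s := SimpleGraph.fromEdgeSet_mono hts
    -- every covered vertex is covered by at least two edges of `t`
    have hdeg : ∀ (w : V) (e : Sym2 V), e ∈ t → w ∈ e → ∃ e' ∈ t, e' ≠ e ∧ w ∈ e' := by
      intro w e het hwe
      have hcard : ((t.filter fun e => w ∈ e).card : ZMod 2) = 0 := by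
        rw [← Finset.sum_boole]
        rw [show (∑ e ∈ t, if w ∈ e then (1 : ZMod 2) else 0)
            = ∑ e ∈ t, G.incMatrix (ZMod 2) w e from
          Finset.sum_congr rfl fun e he => (incMatrix_eq_ite G (hs (hts he)) w).symm]
        exact hsum w
      have hdvd : 2 ∣ (t.filter fun e => w ∈ e).card :=
        (ZMod.natCast_eq_zero_iff _ 2).mp hcard
      have hmem : e ∈ t.filter fun e => w ∈ e := Finset.mem_filter.mpr ⟨het, hwe⟩
      have hlt : 1 < (t.filter fun e => w ∈ e).card := by
        rcases hdvd with ⟨k, hk⟩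
        have hpos : 0 < (t.filter fun e => w ∈ e).card := Finset.card_pos.mpr ⟨e, hmem⟩
        omega
      obtain ⟨e', he', hne⟩ := Finset.exists_mem_ne hlt e
      exact ⟨e', (Finset.mem_filter.mp he').1, hne, (Finset.mem_filter.mp he').2⟩
    -- pick a path of maximal length in `H`
    obtain ⟨e₀, he₀⟩ := htne
    have he₀H : e₀ ∈ H.edgeSet := htH _ he₀
    have hS1 : ∃ a b, H.Adj a b := by
      induction e₀ using Sym2.ind with
      | _ a b => exact ⟨a, b, (H.mem_edgeSet).mp he₀H⟩
    obtain ⟨a, b, hab⟩ := hS1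
    set S : Set ℕ := {n | ∃ (u v : V) (p : H.Walk u v), p.IsPath ∧ p.length = n} with hSdef
    have h1S : 1 ∈ S := by
      refine ⟨a, b, SimpleGraph.Walk.cons hab SimpleGraph.Walk.nil, ?_, rfl⟩
      simp [SimpleGraph.Walk.cons_isPath_iff, hab.ne]
    have hSbdd : BddAbove S := by
      refine ⟨Fintype.card V, fun n hn => ?_⟩
      obtain ⟨u, v, p, hp, hpl⟩ := hn
      exact hpl ▸ le_of_lt hp.length_lt
    have hSne : S.Nonempty := ⟨1, h1S⟩
    have hLmem : sSup S ∈ S := Nat.sSup_mem hSne hSbdd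
    set L := sSup S with hLdef
    have hL1 : 1 ≤ L := le_csSup hSbdd h1S
    obtain ⟨u, v, p, hp, hpl⟩ := hLmem
    -- p is not nil, so it is a cons
    intro hac
    cases p with
    | nil => simp at hpl; omega
    | @cons _ b' _ h' p'' =>
      -- first edge of the path
      have hfirst : s(u, b') ∈ t := hHt (H.mem_edgeSet.mpr h')
      obtain ⟨e', he't, he'ne, hue'⟩ := hdeg u s(u, b') hfirst (by simp)
      obtain ⟨x, rfl⟩ := Sym2.mem_iff_exists.mp hue'
      have hux : H.Adj u x := H.mem_edgeSet.mp (htH _ he't)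
      have hxb : x ≠ b' := by
        rintro rfl
        exact he'ne rfl
      have hp'' : p''.IsPath ∧ u ∉ p''.support :=
        (SimpleGraph.Walk.cons_isPath_iff _ _).mp hp
      by_cases hxsup : x ∈ (SimpleGraph.Walk.cons h' p'').support
      · -- found a cycle
        set q := (SimpleGraph.Walk.cons h' p'').takeUntil x hxsup with hq
        have hqp : q.IsPath := hp.takeUntil hxsup
        have hnotmem : s(x, u) ∉ q.edges := by
          intro hmem
          have hmem' : s(x, u) ∈ (SimpleGraph.Walk.cons h' p'').edges :=
            SimpleGraph.Walk.edges_takeUntil_subset _ hxsup hmem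
          rw [SimpleGraph.Walk.edges_cons, List.mem_cons] at hmem'
          rcases hmem' with hmem' | hmem'
          · rw [Sym2.eq_iff] at hmem'
            rcases hmem' with ⟨h1, h2⟩ | ⟨h1, h2⟩
            · exact hux.ne' h1
            · exact hxb h1
          · exact hp''.2 (SimpleGraph.Walk.snd_mem_support_of_mem_edges p'' hmem')
        have hcyc : (SimpleGraph.Walk.cons hux.symm q).IsCycle :=
          (SimpleGraph.Walk.cons_isCycle_iff q hux.symm).mpr ⟨hqp, hnotmem⟩
        exact hac ((SimpleGraph.Walk.cons hux.symm q).mapLe hHle)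
          (hcyc.mapLe hHle)
      · -- extend the path, contradicting maximality
        have hext : ((SimpleGraph.Walk.cons h' p'').cons hux.symm).IsPath :=
          (SimpleGraph.Walk.cons_isPath_iff _ _).mpr ⟨hp, hxsup⟩
        have : L + 1 ∈ S := ⟨x, v, _, hext, by
          rw [SimpleGraph.Walk.length_cons, hpl]⟩
        have := le_csSup hSbdd this
        omega
  · -- a cycle gives a nonempty zero-sum edge set
    intro hnac
    simp only [SimpleGraph.IsAcyclic, not_forall, not_not] at hnac
    obtain ⟨u, c, hc⟩ := hnac
    refine ⟨c.edges.toFinset, ?_, ?_, ?_⟩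
    · intro e he
      rw [List.coe_toFinset, Set.mem_setOf_eq] at he
      have := c.edges_subset_edgeSet he
      rw [SimpleGraph.edgeSet_fromEdgeSet] at this
      exact this.1
    · have h3 : 3 ≤ c.length := hc.three_le_length
      have : c.edges ≠ [] := by
        intro h
        have := c.length_edges
        rw [h] at this
        simp at this
        omega
      obtain ⟨e, he⟩ := List.exists_mem_of_ne_nil _ this
      exact ⟨e, List.mem_toFinset.mpr he⟩
    · intro w
      have hconv : ∀ e ∈ c.edges.toFinset,
          G.incMatrix (ZMod 2) w e = if w ∈ e then 1 else 0 := by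
        intro e he
        refine incMatrix_eq_ite G ?_ w
        rw [List.mem_toFinset] at he
        have := c.edges_subset_edgeSet he
        rw [SimpleGraph.edgeSet_fromEdgeSet] at this
        exact hs this.1
      rw [Finset.sum_congr rfl hconv]
      exact cycle_sum_zero hc w
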